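/- Let R ⊆ ℚ_{>0} \ {1} be nonempty. If for every positive integer k the graph G(R) contains a clique of size k, then R is a set of multiplicative recurrence. -/

import Mathlib

open MeasureTheory Filter

/-- The graph `G(R)` on the positive integers where distinct `m`, `n` are adjacent
iff `m/n ∈ R` or `n/m ∈ R`. -/
def graphOf (R : Set ℚ) : SimpleGraph ℕ+ where
  Adj m n := m ≠ n ∧ (((m : ℚ) / (n : ℚ)) ∈ R ∨ ((n : ℚ) / (m : ℚ)) ∈ R)
  symm := ⟨fun _ _ h => ⟨h.1.symm, h.2.symm⟩⟩
  loopless := ⟨fun _ h => h.1 rfl⟩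

/-- `R` is a set of (measurable) multiplicative recurrence: for every probability space,
every multiplicative family of measure-preserving maps indexed by the positive integers,
and every measurable set `B` of positive measure, there are positive integers `m`, `n`
with `m/n ∈ R` and `μ(T_m⁻¹ B ∩ T_n⁻¹ B) > 0`. -/
def IsMultRecurrent (R : Set ℚ) : Prop :=
  ∀ (X : Type) [MeasurableSpace X] (μ : Measure X) [IsProbabilityMeasure μ]
    (T : ℕ → X → X),
    (∀ n, 1 ≤ n → MeasurePreserving (T n) μ μ) →
    (∀ m n, 1 ≤ m → 1 ≤ n → T (m * n) = T m ∘ T n) →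
    ∀ B : Set X, MeasurableSet B → 0 < μ B →
      ∃ m n : ℕ, 1 ≤ m ∧ 1 ≤ n ∧ ((m : ℚ) / (n : ℚ)) ∈ R ∧
        0 < μ (T m ⁻¹' B ∩ T n ⁻¹' B)

lemma exists_pos_inter {α ι : Type*} [MeasurableSpace α] (μ : MeasureTheory.Measure α)
    {s : Finset ι} {t : ι → Set α}
    (h : ∀ i ∈ s, MeasurableSet (t i))
    (H : μ Set.univ < ∑ i ∈ s, μ (t i)) :
    ∃ i ∈ s, ∃ j ∈ s, i ≠ j ∧ 0 < μ (t i ∩ t j) := by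
  contrapose! H
  apply MeasureTheory.sum_measure_le_measure_univ (fun i hi => (h i hi).nullMeasurableSet)
  intro i hi j hj hij
  exact le_antisymm (H i hi j hj hij) bot_le

theorem mult_recurrence_of_unbounded_cliques
    (R : Set ℚ) (hR : R ⊆ {q : ℚ | 0 < q ∧ q ≠ 1}) (hne : R.Nonempty)
    (hclique : ∀ k : ℕ, ∃ s : Finset ℕ+, (graphOf R).IsNClique k s) :
    IsMultRecurrent R := by
  intro X _ μ _ T hT hmul B hBmeas hBpos
  have hB0 : μ B ≠ 0 := hBpos.ne'
  have hBfin : (μ B)⁻¹ ≠ ⊤ := ENNReal.inv_ne_top.mpr hB0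
  obtain ⟨k, hk⟩ := ENNReal.exists_nat_gt hBfin
  obtain ⟨s, hs⟩ := hclique k
  set t : ℕ+ → Set X := fun i => T (i : ℕ) ⁻¹' B with ht
  have hTi : ∀ i : ℕ+, MeasurePreserving (T (i : ℕ)) μ μ := fun i => hT _ i.pos
  have hmeas : ∀ i ∈ s, MeasurableSet (t i) := fun i _ =>
    (hTi i).measurable hBmeas
  have hsum : ∑ i ∈ s, μ (t i) = k * μ B := by
    have : ∀ i ∈ s, μ (t i) = μ B := fun i _ =>
      (hTi i).measure_preimage hBmeas.nullMeasurableSet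
    rw [Finset.sum_congr rfl this, Finset.sum_const, hs.2, nsmul_eq_mul]
  have huniv : μ Set.univ < ∑ i ∈ s, μ (t i) := by
    rw [hsum, measure_univ]
    calc (1 : ENNReal) = μ B * (μ B)⁻¹ := (ENNReal.mul_inv_cancel hB0 (measure_ne_top μ B)).symm
    _ < μ B * k := by
        rw [ENNReal.mul_lt_mul_iff_right hB0 (measure_ne_top μ B)]; exact hk
    _ = k * μ B := mul_comm _ _
  obtain ⟨i, hi, j, hj, hij, hpos⟩ := exists_pos_inter μ hmeas huniv
  have hadj : (graphOf R).Adj i j := hs.1 hi hj hij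
  have hcast : ∀ a : ℕ+, ((a : ℕ) : ℚ) = (a : ℚ) := fun a => by norm_cast
  rcases hadj.2 with h | h
  · exact ⟨i, j, i.pos, j.pos, by rw [hcast, hcast]; exact h, hpos⟩
  · exact ⟨j, i, j.pos, i.pos, by rw [hcast, hcast]; exact h,
      by rwa [Set.inter_comm]⟩
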